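/- For every node T_w of the n-universal model T(n) and every NNIL-formula φ in the variables p_1,…,p_n: φ is true at the root w of the tree T_w (evaluated inside the model T_w) if and only if φ is true at the node T_w in the model T(n). -/

import Mathlib

/-! ## Formulas of intuitionistic propositional logic -/

inductive Formula : Type
  | bot : Formula
  | var : ℕ → Formula
  | and : Formula → Formula → Formula
  | or  : Formula → Formula → Formula
  | imp : Formula → Formula → Formula
  deriving DecidableEq

namespace Formula

def top : Formula := imp bot bot

def iff_ (φ ψ : Formula) : Formula := and (imp φ ψ) (imp ψ φ)

/-- `φ` contains no implication at all. -/
def noImp : Formula → Prop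
  | bot => True
  | var _ => True
  | and φ ψ => noImp φ ∧ noImp ψ
  | or φ ψ => noImp φ ∧ noImp ψ
  | imp _ _ => False

/-- NNIL-formulas: no nesting of implications to the left. -/
def IsNNIL : Formula → Prop
  | bot => True
  | var _ => True
  | and φ ψ => IsNNIL φ ∧ IsNNIL ψ
  | or φ ψ => IsNNIL φ ∧ IsNNIL ψ
  | imp φ ψ => noImp φ ∧ IsNNIL ψ

/-- `φ` is an `n`-formula: all its propositional variables are among `p_0, …, p_{n-1}`. -/
def varsBelow (n : ℕ) : Formula → Prop
  | bot => True
  | var p => p < n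
  | and φ ψ => varsBelow n φ ∧ varsBelow n ψ
  | or φ ψ => varsBelow n φ ∧ varsBelow n ψ
  | imp φ ψ => varsBelow n φ ∧ varsBelow n ψ

/-- the propositional variable `p` occurs in the formula -/
def occurs (p : ℕ) : Formula → Prop
  | bot => False
  | var q => q = p
  | and φ ψ => occurs p φ ∨ occurs p ψ
  | or φ ψ => occurs p φ ∨ occurs p ψ
  | imp φ ψ => occurs p φ ∨ occurs p ψ

/-- uniform substitution -/
def subst (σ : ℕ → Formula) : Formula → Formula
  | bot => bot
  | var p => σ p
  | and φ ψ => and (subst σ φ) (subst σ ψ)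
  | or φ ψ => or (subst σ φ) (subst σ ψ)
  | imp φ ψ => imp (subst σ φ) (subst σ ψ)

end Formula

/-- finite conjunction (empty conjunction is ⊤) -/
def listAnd : List Formula → Formula
  | [] => Formula.top
  | φ :: l => Formula.and φ (listAnd l)

/-- finite disjunction (empty disjunction is ⊥) -/
def listOr : List Formula → Formula
  | [] => Formula.bot
  | φ :: l => Formula.or φ (listOr l)

/-! ## Kripke structures, models and satisfaction -/

/-- raw Kripke structure: worlds, relation, Boolean valuation -/
structure KStruct where
  W : Type
  R : W → W → Prop
  V : W → ℕ → Bool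

namespace KStruct

/-- a Kripke model: `R` is a partial order and `V` is persistent -/
def IsModel (M : KStruct) : Prop :=
  (∀ w, M.R w w) ∧
  (∀ w u v, M.R w u → M.R u v → M.R w v) ∧
  (∀ w u, M.R w u → M.R u w → w = u) ∧
  (∀ w u p, M.R w u → M.V w p = true → M.V u p = true)

/-- an `n`-model: a Kripke model whose valuation is restricted to the variables `p_0,…,p_{n-1}` -/
def IsNModel (M : KStruct) (n : ℕ) : Prop :=
  M.IsModel ∧ ∀ w p, n ≤ p → M.V w p = false

/-- intuitionistic satisfaction -/
def sat (M : KStruct) : M.W → Formula → Prop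
  | _, Formula.bot => False
  | w, Formula.var p => M.V w p = true
  | w, Formula.and φ ψ => M.sat w φ ∧ M.sat w ψ
  | w, Formula.or φ ψ => M.sat w φ ∨ M.sat w ψ
  | w, Formula.imp φ ψ => ∀ u, M.R w u → M.sat u φ → M.sat u ψ

/-- the submodel on a subset of the worlds -/
def restrict (M : KStruct) (S : Set M.W) : KStruct where
  W := S
  R := fun a b => M.R a.1 b.1
  V := fun a p => M.V a.1 p

end KStruct

/-- monotonic map between Kripke structures: preserves the order and the colors -/
def Monotonic (M N : KStruct) (f : M.W → N.W) : Prop :=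
  (∀ w u, M.R w u → N.R (f w) (f u)) ∧ (∀ w p, N.V (f w) p = M.V w p)

/-- p-morphism: a monotonic map satisfying the forth condition -/
def PMorphism (M N : KStruct) (f : M.W → N.W) : Prop :=
  Monotonic M N f ∧ ∀ w u', N.R (f w) u' → ∃ u, M.R w u ∧ f u = u'

/-- MR: the class of formulas reflected by monotonic maps between Kripke models -/
def MR (φ : Formula) : Prop :=
  ∀ (N M : KStruct), N.IsModel → M.IsModel →
    ∀ f : N.W → M.W, Monotonic N M f → ∀ w : N.W, M.sat (f w) φ → N.sat w φ

/-- `r` is a root of `M` -/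
def IsRoot (M : KStruct) (r : M.W) : Prop := ∀ w, M.R r w

/-- `M` is tree-like with root `r`: rooted, and each point has a finite,
linearly ordered set of predecessors -/
def IsTree (M : KStruct) (r : M.W) : Prop :=
  IsRoot M r ∧ (∀ w : M.W, {u | M.R u w}.Finite) ∧
  (∀ w u v : M.W, M.R u w → M.R v w → (M.R u v ∨ M.R v u))

/-- `u` is an immediate (proper) successor of `w` -/
def ImmSucc (M : KStruct) (w u : M.W) : Prop :=
  M.R w u ∧ w ≠ u ∧ ∀ v, M.R w v → M.R v u → v = w ∨ v = u

/-- `S` carries a color-preserving submodel of `M` -/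
def ColorPresSub (M : KStruct) (S : Set M.W) : Prop :=
  ∀ w ∈ S, ∀ u, M.R w u → ∃ v ∈ S, M.R w v ∧ ∀ p, M.V v p = M.V u p

/-! ## The β-formulas of finite models -/

/-- the variables among `p_0,…,p_{n-1}` true at `w` -/
def propList (M : KStruct) (n : ℕ) (w : M.W) : List Formula :=
  ((List.range n).filter (fun p => M.V w p)).map Formula.var

/-- the variables among `p_0,…,p_{n-1}` false at `w` -/
def notpropList (M : KStruct) (n : ℕ) (w : M.W) : List Formula :=
  ((List.range n).filter (fun p => !(M.V w p))).map Formula.var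

open Classical in
/-- the immediate successors of `w`, as a list -/
noncomputable def immSuccList (M : KStruct) [Fintype M.W] (w : M.W) : List M.W :=
  (Finset.univ.filter (fun u => ImmSucc M w u)).toList

/-- β(w), defined by recursion on the depth of `w` (computed with enough fuel):
`β(w) = ⋀prop(w) → (⋁notprop(w) ∨ β(w_1) ∨ … ∨ β(w_k))` where the `w_i` are the
immediate successors of `w` (for maximal `w` the last disjunct is the empty disjunction). -/
noncomputable def betaFuel (M : KStruct) [Fintype M.W] (n : ℕ) : ℕ → M.W → Formula
  | 0, _ => Formula.bot
  | (k+1), w =>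
      Formula.imp (listAnd (propList M n w))
        (listOr (notpropList M n w ++ (immSuccList M w).map (fun u => betaFuel M n k u)))

/-- β(w) for a point `w` of a finite `n`-model: `Fintype.card M.W` is an upper bound
for the depth of any point, so the recursion above never runs out of fuel. -/
noncomputable def beta (M : KStruct) [inst : Fintype M.W] (n : ℕ) (w : M.W) : Formula :=
  betaFuel M n (Fintype.card M.W) w

/-! ## Unravelings -/

/-- the unraveling `T_N` of a rooted model `(N, r)`: points are the finite sequences
`⟨r, w_1, …, w_k⟩` in which each entry is an immediate successor of the preceding one,
ordered by the initial-segment relation; such a sequence satisfies the same variables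
as its last entry. -/
def Unravel (M : KStruct) (r : M.W) : KStruct where
  W := {l : List M.W // l.head? = some r ∧ List.Chain' (ImmSucc M) l}
  R := fun σ τ => σ.1 <+: τ.1
  V := fun σ p => (σ.1.getLast?.map (fun w => M.V w p)).getD false

/-! ## Kripke frames -/

structure KFrame where
  W : Type
  R : W → W → Prop

namespace KFrame

/-- a Kripke frame: `R` is a partial order -/
def IsFrame (F : KFrame) : Prop :=
  (∀ w, F.R w w) ∧ (∀ w u v, F.R w u → F.R u v → F.R w v) ∧
  (∀ w u, F.R w u → F.R u w → w = u)

def Persistent (F : KFrame) (V : F.W → ℕ → Bool) : Prop :=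
  ∀ w u p, F.R w u → V w p = true → V u p = true

/-- the model on `F` given by a valuation -/
def model (F : KFrame) (V : F.W → ℕ → Bool) : KStruct := ⟨F.W, F.R, V⟩

/-- `F ⊨ φ` : `φ` is true at every point of every model on `F` -/
def valid (F : KFrame) (φ : Formula) : Prop :=
  ∀ V, F.Persistent V → ∀ w, (F.model V).sat w φ

/-- the substructure of `F` on a subset `S` of its domain, with the restricted order -/
def restrictF (F : KFrame) (S : Set F.W) : KFrame :=
  ⟨S, fun a b => F.R a.1 b.1⟩

end KFrame

/-- a monotonic map from a model `N` into a frame `F` which is color-consistent: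
`f(w) R f(u)` implies `col(w) ≤ col(u)` -/
def ColorConsistentMap (N : KStruct) (F : KFrame) (f : N.W → F.W) : Prop :=
  (∀ w u, N.R w u → F.R (f w) (f u)) ∧
  (∀ w u, F.R (f w) (f u) → ∀ p, N.V w p = true → N.V u p = true)


/-! ## The n-universal model 𝒯(n) for NNIL -/

/-- an `n`-color -/
abbrev Col (n : ℕ) := Fin n → Bool

/-- componentwise order on colors -/
def ColLE {n : ℕ} (c d : Col n) : Prop := ∀ i, c i = true → d i = true

def ColLT {n : ℕ} (c d : Col n) : Prop := ColLE c d ∧ c ≠ d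

/-- finite colored trees: a root color together with the list of subtrees
hanging above the root -/
inductive CTree (n : ℕ) : Type
  | node : Col n → List (CTree n) → CTree n

namespace CTree

variable {n : ℕ}

def color : CTree n → Col n
  | node c _ => c

def children : CTree n → List (CTree n)
  | node _ ts => ts

/-- the subtree of `t` at a position (a list of child indices) -/
def subt : List ℕ → CTree n → Option (CTree n)
  | [], t => some t
  | i :: l, t => (t.children[i]?).bind (subt l)

/-- the finite tree-like `n`-model determined by a colored tree: its worlds are
the positions of `t`, ordered by the initial-segment relation, and a position
satisfies `p_i` iff the color of the subtree there is `1` at `i`. -/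
def toModel (t : CTree n) : KStruct where
  W := {l : List ℕ // (subt l t).isSome = true}
  R := fun a b => a.1 <+: b.1
  V := fun a p =>
    if h : p < n then ((subt a.1 t).map (fun s => s.color ⟨p, h⟩)).getD false
    else false

/-- the root of the model of a tree -/
def root (t : CTree n) : t.toModel.W := ⟨[], rfl⟩

/-- an injective code of colors -/
def colCode (c : Col n) : ℕ := ∑ i : Fin n, (if c i then 2 ^ (i : ℕ) else 0)

/-- an injective code of lists of numbers -/
def listCode : List ℕ → ℕ
  | [] => 0
  | a :: l => Nat.pair a (listCode l) + 1

/-- an injective code of colored trees, used to order the children of every node of a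
tree in the universal model canonically -/
def code : CTree n → ℕ
  | node c ts => Nat.pair (colCode c) (listCode (ts.attach.map (fun x => code x.1)))
decreasing_by
  have := List.sizeOf_lt_of_mem x.2
  simp only [CTree.node.sizeOf_spec]
  omega

end CTree

/-- `MLE s t` (`s ≤ t`): there is a monotonic map from (the model of) `t` into `s` -/
def MLE {n : ℕ} (s t : CTree n) : Prop :=
  ∃ f : t.toModel.W → s.toModel.W, Monotonic t.toModel s.toModel f

/-- membership in the domain of the universal model `𝒯(n)`, built in layers:
layer 1 consists of the one-point trees (one for each color); a tree of a later layer
is built from a set `X` of pairwise `≤`-incomparable trees of earlier layers (encoded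
as a list sorted canonically by `code`) by adding a fresh root below whose color is
strictly smaller than every color occurring in the trees of `X`. -/
inductive UMem : {n : ℕ} → CTree n → Prop
  | single {n : ℕ} (c : Col n) : UMem (CTree.node c [])
  | step {n : ℕ} (c : Col n) (ts : List (CTree n)) :
      ts ≠ [] →
      (∀ t ∈ ts, UMem t) →
      List.Chain' (fun a b => CTree.code a < CTree.code b) ts →
      (∀ t ∈ ts, ∀ s ∈ ts, t ≠ s → ¬ MLE t s) →
      (∀ t ∈ ts, ∀ (l : List ℕ) (s : CTree n), CTree.subt l t = some s →
        ColLT c s.color) →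
      UMem (CTree.node c ts)

/-- the universal model `𝒯(n)`: its points are the trees in `UMem`, ordered by `≤`
(where `T_w ≤ T_u` iff there is a monotonic map from `T_u` into `T_w`), and the color
of a node is the color of the root of the corresponding tree. -/
def UnivModel (n : ℕ) : KStruct where
  W := {t : CTree n // UMem t}
  R := fun a b => MLE a.1 b.1
  V := fun a p => if h : p < n then a.1.color ⟨p, h⟩ else false

/-- mutual monotonic mappability (`≡`) of Kripke structures -/
def MEquiv (A B : KStruct) : Prop :=
  (∃ f : B.W → A.W, Monotonic B A f) ∧ (∃ g : A.W → B.W, Monotonic A B g)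


section Aux

lemma noImp_sat_iff {φ : Formula} (h : φ.noImp) {M N : KStruct} {w : M.W} {u : N.W}
    (hV : ∀ p, M.V w p = N.V u p) : M.sat w φ ↔ N.sat u φ := by
  induction φ with
  | bot => simp [KStruct.sat]
  | var p => simp only [KStruct.sat, hV p]
  | and φ ψ ihφ ihψ => simp only [KStruct.sat]; exact and_congr (ihφ h.1) (ihψ h.2)
  | or φ ψ ihφ ihψ => simp only [KStruct.sat]; exact or_congr (ihφ h.1) (ihψ h.2)
  | imp _ _ _ _ => exact h.elim

lemma noImp_isNNIL {φ : Formula} (h : φ.noImp) : φ.IsNNIL := by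
  induction φ with
  | bot => trivial
  | var p => trivial
  | and φ ψ ihφ ihψ => exact ⟨ihφ h.1, ihψ h.2⟩
  | or φ ψ ihφ ihψ => exact ⟨ihφ h.1, ihψ h.2⟩
  | imp _ _ _ _ => exact h.elim

lemma nnil_reflect {ψ : Formula} (h : ψ.IsNNIL) {N M : KStruct} (f : N.W → M.W)
    (hf : Monotonic N M f) : ∀ w, M.sat (f w) ψ → N.sat w ψ := by
  induction ψ with
  | bot => intro w hw; exact hw
  | var p => intro w hw; simp only [KStruct.sat] at *; rw [← hf.2 w p]; exact hw
  | and φ ψ ihφ ihψ =>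
    intro w hw
    exact ⟨ihφ h.1 w hw.1, ihψ h.2 w hw.2⟩
  | or φ ψ ihφ ihψ =>
    intro w hw
    exact hw.imp (ihφ h.1 w) (ihψ h.2 w)
  | imp φ ψ ihφ ihψ =>
    intro w hw
    simp only [KStruct.sat] at hw ⊢
    intro u hu hφu
    have h1 : M.sat (f u) φ := (noImp_sat_iff h.1 (fun p => hf.2 u p)).mpr hφu
    exact ihψ h.2 u (hw (f u) (hf.1 w u hu) h1)

lemma subt_append {n : ℕ} (a b : List ℕ) :
    ∀ t : CTree n, CTree.subt (a ++ b) t = (CTree.subt a t).bind (CTree.subt b) := by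
  induction a with
  | nil => intro t; rfl
  | cons i a ih =>
    intro t
    simp only [List.cons_append, CTree.subt, Option.bind_assoc]
    cases t.children[i]? with
    | none => rfl
    | some c => simp [ih c]

lemma umem_subt {n : ℕ} : ∀ (l : List ℕ) (t s : CTree n),
    UMem t → CTree.subt l t = some s → UMem s := by
  intro l
  induction l with
  | nil =>
    intro t s ht h
    simp only [CTree.subt] at h
    injection h with h
    exact h ▸ ht
  | cons i l ih =>
    intro t s ht h
    simp only [CTree.subt] at h
    obtain ⟨c, hc, hcs⟩ := Option.bind_eq_some_iff.mp h
    have hmem : c ∈ t.children := by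
      have := List.getElem?_eq_some_iff.mp hc
      obtain ⟨hlt, hEq⟩ := this
      exact hEq ▸ List.getElem_mem hlt
    have hcU : UMem c := by
      cases ht with
      | single c' => simp [CTree.children] at hc
      | step c' ts hne hall _ _ _ => exact hall c hmem
    exact ih c s hcU hcs

lemma mle_subt {n : ℕ} (t s : CTree n) (u : List ℕ)
    (hu : CTree.subt u t = some s) : MLE t s := by
  refine ⟨fun a => ⟨u ++ a.1, ?_⟩, ?_, ?_⟩
  · rw [subt_append, hu]; exact a.2
  · rintro w v ⟨c, hc⟩
    have hc' : w.1 ++ c = v.1 := hc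
    exact ⟨c, by simp [List.append_assoc, hc']⟩
  · intro w p
    simp only [CTree.toModel, subt_append, hu, Option.bind_some]

lemma sat_cone {n : ℕ} (t s : CTree n) (u : List ℕ) (hu : CTree.subt u t = some s)
    (χ : Formula) :
    ∀ (l : List ℕ) (hl : (CTree.subt l s).isSome) (h2 : (CTree.subt (u ++ l) t).isSome),
    (s.toModel.sat ⟨l, hl⟩ χ ↔ t.toModel.sat ⟨u ++ l, h2⟩ χ) := by
  induction χ with
  | bot => intro l hl h2; simp [KStruct.sat]
  | var p =>
    intro l hl h2
    simp only [KStruct.sat, CTree.toModel, subt_append, hu, Option.bind_some]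
  | and φ ψ ihφ ihψ =>
    intro l hl h2
    simp only [KStruct.sat]
    exact and_congr (ihφ l hl h2) (ihψ l hl h2)
  | or φ ψ ihφ ihψ =>
    intro l hl h2
    simp only [KStruct.sat]
    exact or_congr (ihφ l hl h2) (ihψ l hl h2)
  | imp φ ψ ihφ ihψ =>
    intro l hl h2
    simp only [KStruct.sat]
    constructor
    · rintro h ⟨v1, hv2⟩ ⟨c, hc⟩ hφv
      have hc' : (u ++ l) ++ c = v1 := hc
      have hv1 : v1 = u ++ (l ++ c) := by rw [← hc']; simp
      subst hv1
      have hls : (CTree.subt (l ++ c) s).isSome := by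
        have h' := hv2
        rw [subt_append, hu, Option.bind_some] at h'
        exact h'
      have hr : s.toModel.R ⟨l, hl⟩ ⟨l ++ c, hls⟩ := ⟨c, rfl⟩
      have := h ⟨l ++ c, hls⟩ hr ((ihφ (l ++ c) hls hv2).mpr hφv)
      exact (ihψ (l ++ c) hls hv2).mp this
    · rintro h ⟨v1, hv2⟩ ⟨c, hc⟩ hφv
      have hc' : l ++ c = v1 := hc
      have hv1 : v1 = l ++ c := hc'.symm
      subst hv1
      have ht2 : (CTree.subt (u ++ (l ++ c)) t).isSome := by
        rw [subt_append, hu, Option.bind_some]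
        exact hv2
      have hr : t.toModel.R ⟨u ++ l, h2⟩ ⟨u ++ (l ++ c), ht2⟩ :=
        ⟨c, by simp⟩
      have := h ⟨u ++ (l ++ c), ht2⟩ hr ((ihφ (l ++ c) hv2 ht2).mp hφv)
      exact (ihψ (l ++ c) hv2 ht2).mpr this

end Aux

theorem univ_node_local_global_sat' (n : ℕ) (t : CTree n) (ht : UMem t)
    (φ : Formula) (hφ : φ.IsNNIL) (hv : φ.varsBelow n) :
    (t.toModel.sat t.root φ ↔ (UnivModel n).sat ⟨t, ht⟩ φ) := by
  induction φ generalizing t ht with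
  | bot => simp [KStruct.sat]
  | var p =>
    simp [KStruct.sat, CTree.toModel, UnivModel, CTree.root, CTree.subt]
  | and φ ψ ihφ ihψ =>
    simp only [KStruct.sat]
    exact and_congr (ihφ t ht hφ.1 hv.1) (ihψ t ht hφ.2 hv.2)
  | or φ ψ ihφ ihψ =>
    simp only [KStruct.sat]
    exact or_congr (ihφ t ht hφ.1 hv.1) (ihψ t ht hφ.2 hv.2)
  | imp φ ψ ihφ ihψ =>
    obtain ⟨hφni, hψn⟩ := hφ
    obtain ⟨hφv, hψv⟩ := hv
    have hφn : φ.IsNNIL := noImp_isNNIL hφni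
    simp only [KStruct.sat]
    constructor
    · rintro h ⟨s', hs'⟩ hR hφ'
      obtain ⟨f, hf⟩ := hR
      have h1 : s'.toModel.sat s'.root φ := (ihφ s' hs' hφn hφv).mpr hφ'
      have h2 : t.toModel.sat (f s'.root) φ :=
        (noImp_sat_iff hφni (fun p => hf.2 s'.root p)).mpr h1
      have h3 : t.toModel.sat (f s'.root) ψ :=
        h (f s'.root) List.nil_prefix h2
      have h4 : s'.toModel.sat s'.root ψ := nnil_reflect hψn f hf s'.root h3
      exact (ihψ s' hs' hψn hψv).mp h4
    · intro h u _ hφu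
      obtain ⟨s, hs⟩ := Option.isSome_iff_exists.mp u.2
      have hsU : UMem s := umem_subt u.1 t s ht hs
      have cone := sat_cone t s u.1 hs
      have hl : (CTree.subt ([] : List ℕ) s).isSome := by rw [show CTree.subt [] s = some s from rfl]; rfl
      have h2 : (CTree.subt (u.1 ++ []) t).isSome := by rw [List.append_nil]; exact u.2
      have hue : (⟨u.1 ++ [], h2⟩ : t.toModel.W) = u := Subtype.ext (List.append_nil _)
      have c1 : s.toModel.sat ⟨[], hl⟩ φ := (cone φ [] hl h2).mpr (by rw [hue]; exact hφu)
      have uφ : (UnivModel n).sat ⟨s, hsU⟩ φ := (ihφ s hsU hφn hφv).mp c1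
      have uψ : (UnivModel n).sat ⟨s, hsU⟩ ψ := h ⟨s, hsU⟩ (mle_subt t s u.1 hs) uφ
      have c2 : s.toModel.sat ⟨[], hl⟩ ψ := (ihψ s hsU hψn hψv).mpr uψ
      have := (cone ψ [] hl h2).mp c2
      rw [← hue]
      exact this


/-- for a node `T_w` of `𝒯(n)` and a NNIL-formula `φ` in `p_0,…,p_{n-1}`,
`φ` holds at the root of the tree `T_w` iff `φ` holds at the node `T_w` in `𝒯(n)`. -/
theorem univ_node_local_global_sat (n : ℕ) (t : CTree n) (ht : UMem t)
    (φ : Formula) (hφ : φ.IsNNIL) (hv : φ.varsBelow n) :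
    (t.toModel.sat t.root φ ↔ (UnivModel n).sat ⟨t, ht⟩ φ) := by
  exact univ_node_local_global_sat' n t ht φ hφ hv
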